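/- Let m and C be natural numbers with 2 ≤ m ≤ C, and let H_n = ∑_{i=1}^{n} 1/i denote the n-th harmonic number. Then H_m / H_C ≥ log m / log C. In words: the cumulative head coverage of the Zipf-1 rank-frequency distribution (H_m/H_C for the top m of C modes) is at least the log-head coverage F_log(m, C) = log m / log C, so the log-head coverage form is conservative relative to Zipf-1. -/

import Mathlib

/-- The `n`-th harmonic number `H_n = ∑_{i=1}^{n} 1/i`, as a real number. -/
noncomputable def harmonicR (n : ℕ) : ℝ := ∑ i ∈ Finset.range n, 1 / (i + 1 : ℝ)

lemma harmonicR_succ (n : ℕ) : harmonicR (n + 1) = harmonicR n + 1 / (n + 1 : ℝ) := by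
  simp [harmonicR, Finset.sum_range_succ]

lemma log_succ_le_harmonicR (n : ℕ) : Real.log (n + 1) ≤ harmonicR n := by
  induction n with
  | zero => simp [harmonicR]
  | succ n ih =>
    rw [harmonicR_succ]
    have h1 : Real.log ((n + 2 : ℝ) / (n + 1 : ℝ)) ≤ 1 / (n + 1 : ℝ) := by
      have hpos : (0:ℝ) < (n + 2 : ℝ) / (n + 1 : ℝ) := by positivity
      have := Real.log_le_sub_one_of_pos hpos
      have h2 : (n + 2 : ℝ) / (n + 1 : ℝ) - 1 = 1 / (n + 1 : ℝ) := by
        field_simp; ring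
      linarith [this, h2.le]
    have hlog : Real.log ((n:ℝ) + 1 + 1) = Real.log ((n + 2 : ℝ) / (n + 1 : ℝ)) + Real.log ((n:ℝ) + 1) := by
      rw [Real.log_div (by positivity) (by positivity)]
      ring_nf
    push_cast
    push_cast at ih
    linarith
  
lemma one_div_le_log_diff (n : ℕ) (hn : 1 ≤ n) :
    1 / ((n:ℝ) + 1) ≤ Real.log ((n:ℝ) + 1) - Real.log n := by
  have hn0 : (0:ℝ) < n := by exact_mod_cast hn
  have hx : (0:ℝ) < (n:ℝ) / ((n:ℝ) + 1) := by positivity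
  have := Real.log_le_sub_one_of_pos hx
  have hlog : Real.log ((n:ℝ) / ((n:ℝ) + 1)) = Real.log n - Real.log ((n:ℝ) + 1) := by
    rw [Real.log_div (ne_of_gt hn0) (by positivity)]
  have h2 : (n:ℝ) / ((n:ℝ) + 1) - 1 = -(1 / ((n:ℝ) + 1)) := by field_simp; ring
  rw [hlog, h2] at this
  linarith

lemma diff_antitone (m C : ℕ) (hm : 1 ≤ m) (hmC : m ≤ C) :
    harmonicR C - Real.log C ≤ harmonicR m - Real.log m := by
  induction C with
  | zero => omega
  | succ n ih =>
    rcases Nat.lt_or_ge m (n + 1) with h | h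
    · have hn : m ≤ n := by omega
      have hn1 : 1 ≤ n := le_trans hm hn
      have := one_div_le_log_diff n hn1
      have hrec := ih hn
      rw [harmonicR_succ]
      push_cast
      linarith
    · have : m = n + 1 := by omega
      subst this; simp

theorem zipf_head_ge_log_head (m C : ℕ) (hm : 2 ≤ m) (hmC : m ≤ C) :
    harmonicR m / harmonicR C ≥ Real.log m / Real.log C := by
  have hC2 : 2 ≤ C := le_trans hm hmC
  have hlogm : 0 < Real.log m := by
    apply Real.log_pos; exact_mod_cast hm
  have hlogC : 0 < Real.log C := by
    apply Real.log_pos; exact_mod_cast hC2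
  have hlogmC : Real.log m ≤ Real.log C := by
    apply Real.log_le_log (by positivity)
    exact_mod_cast hmC
  have hHm : Real.log m ≤ harmonicR m := by
    have := log_succ_le_harmonicR m
    have h2 : Real.log m ≤ Real.log ((m:ℝ) + 1) := by
      apply Real.log_le_log (by exact_mod_cast (by omega : 0 < m)); linarith
    linarith
  have hHC : Real.log C ≤ harmonicR C := by
    have := log_succ_le_harmonicR C
    have h2 : Real.log C ≤ Real.log ((C:ℝ) + 1) := by
      apply Real.log_le_log (by exact_mod_cast (by omega : 0 < C)); linarith
    linarith
  have hHCpos : 0 < harmonicR C := lt_of_lt_of_le hlogC hHC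
  have hdiff := diff_antitone m C (by omega) hmC
  rw [ge_iff_le, div_le_div_iff₀ hlogC hHCpos]
  nlinarith [mul_nonneg (sub_nonneg.2 hHC) (sub_nonneg.2 hlogmC)]
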